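/- arXiv:2505.24749 — 2 statements merged into one kernel-verified Lean document; each statement's English description precedes it below -/
import Mathlib

section
/- Let g ∈ ℝ^{n×m} be a rank-one matrix and b ∈ ℝ^{n×m} satisfy ⟨g, b⟩_F = 0. Then for every a ≥ 0, the largest singular value of a·g + b satisfies σ₁(a·g + b) ≥ a·‖g‖_F. -/
open Matrix Finset

/-- Frobenius inner product `⟨A,B⟩_F = tr(AᵀB)`. -/
noncomputable def frobInner {n m : ℕ} (A B : Matrix (Fin n) (Fin m) ℝ) : ℝ :=
  (Aᵀ * B).trace

/-- Frobenius norm. -/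
noncomputable def frobNorm {n m : ℕ} (A : Matrix (Fin n) (Fin m) ℝ) : ℝ :=
  Real.sqrt (frobInner A A)

/-- Spectral norm (largest singular value): the supremum of `‖Ax‖₂` over unit vectors `x`. -/
noncomputable def specNorm {n m : ℕ} (A : Matrix (Fin n) (Fin m) ℝ) : ℝ :=
  sSup {r : ℝ | ∃ x : Fin m → ℝ, ∑ j, x j ^ 2 = 1 ∧
    r = Real.sqrt (∑ i, (A.mulVec x) i ^ 2)}

lemma frobInner_eq_sum {n m : ℕ} (A B : Matrix (Fin n) (Fin m) ℝ) :
    frobInner A B = ∑ j, ∑ i, A i j * B i j := by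
  simp [frobInner, Matrix.trace, Matrix.mul_apply, Matrix.transpose_apply, Matrix.diag]

lemma specSet_bddAbove {n m : ℕ} (A : Matrix (Fin n) (Fin m) ℝ) :
    BddAbove {r : ℝ | ∃ x : Fin m → ℝ, ∑ j, x j ^ 2 = 1 ∧
      r = Real.sqrt (∑ i, (A.mulVec x) i ^ 2)} := by
  refine ⟨Real.sqrt (∑ i, ∑ j, A i j ^ 2), ?_⟩
  rintro r ⟨x, hx, rfl⟩
  apply Real.sqrt_le_sqrt
  refine Finset.sum_le_sum fun i _ => ?_
  have h1 : A.mulVec x i = ∑ j, A i j * x j := by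
    simp [Matrix.mulVec, dotProduct]
  rw [h1]
  calc (∑ j, A i j * x j) ^ 2 ≤ (∑ j, A i j ^ 2) * ∑ j, x j ^ 2 :=
        Finset.sum_mul_sq_le_sq_mul_sq _ _ _
    _ = ∑ j, A i j ^ 2 := by rw [hx, mul_one]

/-- If `g` is rank one and `b ⟂ g` in the Frobenius inner product, then for every `a ≥ 0`,
the largest singular value of `a g + b` is at least `a ‖g‖_F`. -/
theorem specNorm_rankOne_add_orth_ge
    {n m : ℕ} (g b : Matrix (Fin n) (Fin m) ℝ)
    (hg : g.rank = 1) (horth : frobInner g b = 0) :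
    ∀ a : ℝ, 0 ≤ a → a * frobNorm g ≤ specNorm (a • g + b) := by
  intro a ha
  -- rank-one decomposition
  have hdec : ∃ u : Fin n → ℝ, ∃ v : Fin m → ℝ, u ≠ 0 ∧ (∀ i j, g i j = u i * v j) := by
    rw [Matrix.rank] at hg
    obtain ⟨u0, hu0, hspan⟩ := finrank_eq_one_iff'.mp hg
    have hcol : ∀ j : Fin m, ∃ c : ℝ, ∀ i, c * (u0 : Fin n → ℝ) i = g i j := by
      intro j
      obtain ⟨c, hc⟩ := hspan ⟨g.mulVec (Pi.single j 1),
        LinearMap.mem_range.mpr ⟨Pi.single j 1, by simp [Matrix.mulVecLin_apply]⟩⟩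
      refine ⟨c, fun i => ?_⟩
      have := congrArg (fun w : LinearMap.range g.mulVecLin => (w : Fin n → ℝ) i) hc
      simpa [Matrix.mulVec_single] using this
    choose v hv using hcol
    exact ⟨(u0 : Fin n → ℝ), v, by simpa using hu0, fun i j => by rw [← hv j i]; ring⟩
  obtain ⟨u, v, hu, hguv⟩ := hdec
  set U2 : ℝ := ∑ i, u i ^ 2 with hU2
  set V2 : ℝ := ∑ j, v j ^ 2 with hV2
  have hU2pos : 0 < U2 := by
    obtain ⟨i0, hi0⟩ := Function.ne_iff.mp hu
    have hi0' : u i0 ≠ 0 := by simpa using hi0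
    have : (0:ℝ) < u i0 ^ 2 := pow_two_pos_of_ne_zero hi0'
    exact lt_of_lt_of_le this (Finset.single_le_sum (f := fun i => u i ^ 2)
      (fun i _ => sq_nonneg _) (Finset.mem_univ i0))
  have hV2pos : 0 < V2 := by
    rcases (lt_or_eq_of_le (Finset.sum_nonneg fun j _ => sq_nonneg (v j))) with h | h
    · exact h
    · exfalso
      have hv0 : ∀ j, v j = 0 := by
        intro j
        have := (Finset.sum_eq_zero_iff_of_nonneg (fun j _ => sq_nonneg (v j))).mp h.symm j
          (Finset.mem_univ j)
        exact pow_eq_zero_iff (two_ne_zero) |>.mp this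
      have hg0 : g = 0 := by
        ext i j; simp [hguv i j, hv0 j]
      rw [hg0, Matrix.rank_zero] at hg
      exact absurd hg (by norm_num)
  have hVs : Real.sqrt V2 * Real.sqrt V2 = V2 := Real.mul_self_sqrt hV2pos.le
  have hVspos : 0 < Real.sqrt V2 := Real.sqrt_pos.mpr hV2pos
  -- the test vector
  set x : Fin m → ℝ := fun j => v j / Real.sqrt V2 with hxdef
  have hx : ∑ j, x j ^ 2 = 1 := by
    simp only [hxdef, div_pow]
    rw [← Finset.sum_div, Real.sq_sqrt hV2pos.le, ← hV2, div_self hV2pos.ne']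
  set A : Matrix (Fin n) (Fin m) ℝ := a • g + b with hA
  set y : Fin n → ℝ := A.mulVec x with hy
  have hyi : ∀ i, y i = ∑ j, (a * (u i * v j) + b i j) * (v j / Real.sqrt V2) := by
    intro i
    simp only [hy, hA, Matrix.mulVec, dotProduct, Matrix.add_apply, Matrix.smul_apply,
      smul_eq_mul, hguv i, hxdef]
  -- orthogonality as a sum
  have hb : ∑ j, ∑ i, (u i * v j) * b i j = 0 := by
    have h0 := horth
    rw [frobInner_eq_sum] at h0
    calc ∑ j, ∑ i, (u i * v j) * b i j = ∑ j, ∑ i, g i j * b i j :=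
          Finset.sum_congr rfl fun j _ => Finset.sum_congr rfl fun i _ => by rw [hguv]
      _ = 0 := h0
  -- key inner product
  have hkey : ∑ i, u i * y i = a * U2 * Real.sqrt V2 := by
    have expand : (∑ i, u i * y i) * Real.sqrt V2
        = a * (U2 * V2) + ∑ j, ∑ i, (u i * v j) * b i j := by
      calc (∑ i, u i * y i) * Real.sqrt V2
          = ∑ i, ∑ j, (a * (u i ^ 2 * v j ^ 2) + (u i * v j) * b i j) := by
            rw [Finset.sum_mul]
            refine Finset.sum_congr rfl fun i _ => ?_
            rw [hyi, Finset.mul_sum, Finset.sum_mul]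
            refine Finset.sum_congr rfl fun j _ => ?_
            field_simp
        _ = a * (U2 * V2) + ∑ j, ∑ i, (u i * v j) * b i j := by
            simp only [Finset.sum_add_distrib]
            congr 1
            · rw [hU2, hV2, Finset.sum_mul_sum, Finset.mul_sum]
              exact Finset.sum_congr rfl fun i _ => by rw [Finset.mul_sum]
            · exact Finset.sum_comm
    rw [hb, add_zero] at expand
    have h2 : (a * U2 * Real.sqrt V2) * Real.sqrt V2 = a * (U2 * V2) := by
      rw [mul_assoc, hVs]; ring
    have := expand.trans h2.symm
    exact mul_right_cancel₀ hVspos.ne' this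
  -- Cauchy-Schwarz
  have hcs : (∑ i, u i * y i) ^ 2 ≤ U2 * ∑ i, y i ^ 2 :=
    Finset.sum_mul_sq_le_sq_mul_sq _ _ _
  rw [hkey] at hcs
  have hlow : a ^ 2 * (U2 * V2) ≤ ∑ i, y i ^ 2 := by
    have h3 : (a * U2 * Real.sqrt V2) ^ 2 = U2 * (a ^ 2 * (U2 * V2)) := by
      rw [mul_pow, mul_pow, Real.sq_sqrt hV2pos.le]; ring
    rw [h3] at hcs
    exact le_of_mul_le_mul_left hcs hU2pos
  -- frobNorm g
  have hfrob : frobNorm g = Real.sqrt (U2 * V2) := by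
    rw [frobNorm, frobInner_eq_sum]
    congr 1
    rw [hU2, hV2, Finset.sum_mul_sum, Finset.sum_comm]
    exact Finset.sum_congr rfl fun j _ => Finset.sum_congr rfl fun i _ => by
      rw [hguv]; ring
  -- conclude
  have hr : a * frobNorm g ≤ Real.sqrt (∑ i, y i ^ 2) := by
    rw [hfrob]
    calc a * Real.sqrt (U2 * V2) = Real.sqrt (a ^ 2 * (U2 * V2)) := by
          rw [Real.sqrt_mul (sq_nonneg a), Real.sqrt_sq ha]
      _ ≤ Real.sqrt (∑ i, y i ^ 2) := Real.sqrt_le_sqrt hlow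
  refine hr.trans (le_csSup (specSet_bddAbove A) ⟨x, hx, rfl⟩)
end

section
/- Let f : ℝ^{m×n} → ℝ (m ≤ n) be differentiable with L-Lipschitz gradient and bounded below by f*. For t = 1, …, T suppose M^(t) ∈ ℝ^{m×n} has SVD M^(t) = U^(t)S^(t)V^(t)ᵀ, O^(t) = U^(t)V^(t)ᵀ + E^(t) with ‖E^(t)‖_F ≤ δ√m, W^(t+1) = W^(t) − η O^(t) with constant step size η > 0, and the alignment inequality −⟨∇f(W^(t)), U^(t)V^(t)ᵀ⟩_F ≤ −¼‖∇f(W^(t))‖_F + (5/2)‖∇f(W^(t)) − M^(t)‖_F holds at each step. Then ((η − 4η√m·δ)/4) · Σ_{t=1}^{T} ‖∇f(W^(t))‖_F ≤ f(W^(1)) − f* + (5η/2) Σ_{t=1}^{T} ‖∇f(W^(t)) − M^(t)‖_F + η²mLT/2 + Tη²mLδ + Tη²Lmδ²/2. -/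
open Matrix Finset

noncomputable def toE {a b : ℕ} (A : Matrix (Fin a) (Fin b) ℝ) : EuclideanSpace ℝ (Fin a × Fin b) :=
  WithLp.toLp 2 (fun p : Fin a × Fin b => A p.1 p.2)

lemma frobInner_eq_inner {a b : ℕ} (A B : Matrix (Fin a) (Fin b) ℝ) :
    frobInner A B = inner ℝ (toE A) (toE B) := by
  simp [frobInner, Matrix.trace, Matrix.diag, Matrix.mul_apply, toE, PiLp.inner_apply,
    RCLike.inner_apply, Fintype.sum_prod_type]
  rw [Finset.sum_comm]
  exact Finset.sum_congr rfl fun _ _ => Finset.sum_congr rfl fun _ _ => mul_comm (A _ _) _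

lemma frobNorm_eq_norm {a b : ℕ} (A : Matrix (Fin a) (Fin b) ℝ) :
    frobNorm A = ‖toE A‖ := by
  rw [frobNorm, frobInner_eq_inner, real_inner_self_eq_norm_sq]
  simp [Real.sqrt_sq (norm_nonneg _)]

lemma toE_add {a b : ℕ} (A B : Matrix (Fin a) (Fin b) ℝ) : toE (A + B) = toE A + toE B := rfl
lemma toE_sub {a b : ℕ} (A B : Matrix (Fin a) (Fin b) ℝ) : toE (A - B) = toE A - toE B := rfl
lemma toE_smul {a b : ℕ} (s : ℝ) (A : Matrix (Fin a) (Fin b) ℝ) : toE (s • A) = s • toE A := rfl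
lemma toE_neg {a b : ℕ} (A : Matrix (Fin a) (Fin b) ℝ) : toE (-A) = -toE A := rfl

lemma frobNorm_nonneg {a b : ℕ} (A : Matrix (Fin a) (Fin b) ℝ) : 0 ≤ frobNorm A := by
  rw [frobNorm_eq_norm]; exact norm_nonneg _

lemma frobInner_le {a b : ℕ} (A B : Matrix (Fin a) (Fin b) ℝ) :
    frobInner A B ≤ frobNorm A * frobNorm B := by
  rw [frobInner_eq_inner, frobNorm_eq_norm, frobNorm_eq_norm]
  exact real_inner_le_norm _ _

lemma frobNorm_add_le {a b : ℕ} (A B : Matrix (Fin a) (Fin b) ℝ) :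
    frobNorm (A + B) ≤ frobNorm A + frobNorm B := by
  simp only [frobNorm_eq_norm, toE_add]; exact norm_add_le _ _

lemma frobNorm_smul {a b : ℕ} (s : ℝ) (A : Matrix (Fin a) (Fin b) ℝ) :
    frobNorm (s • A) = |s| * frobNorm A := by
  simp only [frobNorm_eq_norm, toE_smul, norm_smul, Real.norm_eq_abs]

lemma frobNorm_neg {a b : ℕ} (A : Matrix (Fin a) (Fin b) ℝ) : frobNorm (-A) = frobNorm A := by
  simp only [frobNorm_eq_norm, toE_neg, norm_neg]

lemma frobInner_sub_left {a b : ℕ} (A B C : Matrix (Fin a) (Fin b) ℝ) :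
    frobInner (A - B) C = frobInner A C - frobInner B C := by
  simp [frobInner, Matrix.transpose_sub, Matrix.sub_mul]

lemma frobInner_add_right {a b : ℕ} (A B C : Matrix (Fin a) (Fin b) ℝ) :
    frobInner A (B + C) = frobInner A B + frobInner A C := by
  simp [frobInner, Matrix.mul_add]

lemma frobInner_smul_right {a b : ℕ} (s : ℝ) (A B : Matrix (Fin a) (Fin b) ℝ) :
    frobInner A (s • B) = s * frobInner A B := by
  simp [frobInner, Matrix.mul_smul]

lemma frobInner_neg_right {a b : ℕ} (A B : Matrix (Fin a) (Fin b) ℝ) :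
    frobInner A (-B) = -frobInner A B := by
  simp [frobInner, Matrix.mul_neg]

lemma frobNorm_of_orth {a b : ℕ} (P : Matrix (Fin a) (Fin b) ℝ) (h : P * Pᵀ = 1) :
    frobNorm P = Real.sqrt a := by
  rw [frobNorm, frobInner, Matrix.trace_mul_comm, h]
  simp [Matrix.trace_one]

lemma descent_step {m n : ℕ}
    (f : Matrix (Fin m) (Fin n) ℝ → ℝ)
    (gradf : Matrix (Fin m) (Fin n) ℝ → Matrix (Fin m) (Fin n) ℝ)
    (hgrad : ∀ W V : Matrix (Fin m) (Fin n) ℝ,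
      HasDerivAt (fun s : ℝ => f (W + s • V)) (frobInner (gradf W) V) 0)
    (L : ℝ) (hL : 0 ≤ L)
    (hlip : ∀ X Y : Matrix (Fin m) (Fin n) ℝ,
      frobNorm (gradf X - gradf Y) ≤ L * frobNorm (X - Y))
    (X V : Matrix (Fin m) (Fin n) ℝ) :
    f (X + V) ≤ f X + frobInner (gradf X) V + L / 2 * frobNorm V ^ 2 := by
  set c0 := frobInner (gradf X) V with hc0
  set K := L / 2 * frobNorm V ^ 2 with hK
  have hF : ∀ s : ℝ, HasDerivAt (fun u : ℝ => f (X + u • V))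
      (frobInner (gradf (X + s • V)) V) s := by
    intro s
    have hsub : HasDerivAt (fun u : ℝ => u - s) 1 s := (hasDerivAt_id s).sub_const s
    have hg : HasDerivAt (fun τ : ℝ => f (X + s • V + τ • V))
        (frobInner (gradf (X + s • V)) V) ((fun u : ℝ => u - s) s) := by
      simpa using hgrad (X + s • V) V
    have h1 : HasDerivAt ((fun τ : ℝ => f (X + s • V + τ • V)) ∘ (fun u : ℝ => u - s))
        (frobInner (gradf (X + s • V)) V * 1) s := HasDerivAt.comp s hg hsub
    simp only [mul_one] at h1
    convert h1 using 1
    funext u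
    simp only [Function.comp]
    congr 1
    rw [add_assoc, ← add_smul]
    ring_nf
  set φ : ℝ → ℝ := fun s => f (X + s • V) - s * c0 - s ^ 2 * K with hφdef
  have hφ : ∀ s : ℝ, HasDerivAt φ
      (frobInner (gradf (X + s • V)) V - c0 - 2 * s * K) s := by
    intro s
    have h2 : HasDerivAt (fun u : ℝ => u * c0) c0 s := by
      simpa using (hasDerivAt_id s).mul_const c0
    have h3 : HasDerivAt (fun u : ℝ => u ^ 2 * K) (2 * s * K) s := by
      have := (hasDerivAt_pow 2 s).mul_const K
      simpa [mul_comm, mul_assoc] using this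
    exact ((hF s).sub h2).sub h3
  have hanti : AntitoneOn φ (Set.Icc 0 1) := by
    apply antitoneOn_of_deriv_nonpos (convex_Icc (0:ℝ) 1)
    · exact (Continuous.continuousOn (by
        rw [continuous_iff_continuousAt]; exact fun s => (hφ s).continuousAt))
    · exact fun x _ => (hφ x).differentiableAt.differentiableWithinAt
    · intro x hx
      rw [interior_Icc] at hx
      rw [(hφ x).deriv]
      have hcs : frobInner (gradf (X + x • V)) V - c0 ≤ L * x * frobNorm V ^ 2 := by
        rw [hc0, ← frobInner_sub_left]
        calc frobInner (gradf (X + x • V) - gradf X) V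
            ≤ frobNorm (gradf (X + x • V) - gradf X) * frobNorm V := frobInner_le _ _
          _ ≤ (L * frobNorm (X + x • V - X)) * frobNorm V := by
              exact mul_le_mul_of_nonneg_right (hlip _ _) (frobNorm_nonneg _)
          _ = L * x * frobNorm V ^ 2 := by
              rw [add_sub_cancel_left, frobNorm_smul, abs_of_pos hx.1]; ring
      have : 2 * x * K = L * x * frobNorm V ^ 2 := by rw [hK]; ring
      linarith
  have h01 : φ 1 ≤ φ 0 := hanti (Set.mem_Icc.mpr ⟨le_refl 0, zero_le_one⟩)
    (Set.mem_Icc.mpr ⟨zero_le_one, le_refl 1⟩) zero_le_one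
  simp only [hφdef, one_smul, zero_smul, add_zero, one_pow, one_mul, zero_mul,
    zero_pow, sub_zero, mul_zero] at h01
  linarith


/-- **Summed descent inequality with Newton–Schulz error.**
Telescoping the one-step descent lemma of the Muon update with inexact orthogonalization
`O^(t) = U^(t)V^(t)ᵀ + E^(t)`, `‖E^(t)‖_F ≤ δ√m`, constant step size `η`, over `t = 1,…,T`. -/
theorem summed_descent_newton_schulz_error
    {m n : ℕ} (hmn : m ≤ n)
    (f : Matrix (Fin m) (Fin n) ℝ → ℝ)
    (gradf : Matrix (Fin m) (Fin n) ℝ → Matrix (Fin m) (Fin n) ℝ)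
    (hgrad : ∀ W V : Matrix (Fin m) (Fin n) ℝ,
      HasDerivAt (fun s : ℝ => f (W + s • V)) (frobInner (gradf W) V) 0)
    (L : ℝ) (hL : 0 ≤ L)
    (hlip : ∀ X Y : Matrix (Fin m) (Fin n) ℝ,
      frobNorm (gradf X - gradf Y) ≤ L * frobNorm (X - Y))
    (fstar : ℝ) (hfstar : ∀ X, fstar ≤ f X)
    (T : ℕ) (hT : 1 ≤ T)
    (W M P E O : ℕ → Matrix (Fin m) (Fin n) ℝ)
    (δ : ℝ) (hδ : 0 ≤ δ)
    (hP : ∀ t ∈ Finset.Icc 1 T, P t * (P t)ᵀ = 1)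
    (hO : ∀ t ∈ Finset.Icc 1 T, O t = P t + E t)
    (hE : ∀ t ∈ Finset.Icc 1 T, frobNorm (E t) ≤ δ * Real.sqrt m)
    (η : ℝ) (hη : 0 < η)
    (hupdate : ∀ t ∈ Finset.Icc 1 T, W (t + 1) = W t - η • O t)
    (halign : ∀ t ∈ Finset.Icc 1 T,
      -(frobInner (gradf (W t)) (P t)) ≤
        -(1 / 4) * frobNorm (gradf (W t)) + (5 / 2) * frobNorm (gradf (W t) - M t)) :
    (η - 4 * η * Real.sqrt m * δ) / 4 * ∑ t ∈ Finset.Icc 1 T, frobNorm (gradf (W t)) ≤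
      f (W 1) - fstar
      + (5 * η / 2) * ∑ t ∈ Finset.Icc 1 T, frobNorm (gradf (W t) - M t)
      + η ^ 2 * m * L * T / 2 + T * η ^ 2 * m * L * δ + T * η ^ 2 * L * m * δ ^ 2 / 2 := by
  have hm0 : (0:ℝ) ≤ (m:ℝ) := Nat.cast_nonneg m
  have hsqm : Real.sqrt (m:ℝ) ^ 2 = (m:ℝ) := Real.sq_sqrt hm0
  have hsqm0 : 0 ≤ Real.sqrt (m:ℝ) := Real.sqrt_nonneg _
  -- per-step inequality
  have hstep : ∀ t ∈ Finset.Icc 1 T,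
      (η - 4 * η * Real.sqrt m * δ) / 4 * frobNorm (gradf (W t)) ≤
        (f (W t) - f (W (t + 1)))
        + (5 * η / 2) * frobNorm (gradf (W t) - M t)
        + (η ^ 2 * m * L / 2 + η ^ 2 * m * L * δ + η ^ 2 * L * m * δ ^ 2 / 2) := by
    intro t ht
    set G := frobNorm (gradf (W t)) with hG
    set D := frobNorm (gradf (W t) - M t) with hD
    have hdesc := descent_step f gradf hgrad L hL hlip (W t) (-(η • O t))
    have hWt : W t + -(η • O t) = W (t + 1) := by
      rw [hupdate t ht, sub_eq_add_neg]
    rw [hWt] at hdesc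
    -- inner product bound
    have h1 : frobInner (gradf (W t)) (-(η • O t)) =
        η * (-(frobInner (gradf (W t)) (P t))) + η * (-(frobInner (gradf (W t)) (E t))) := by
      rw [hO t ht, frobInner_neg_right, frobInner_smul_right, frobInner_add_right]; ring
    have h2 : -(frobInner (gradf (W t)) (E t)) ≤ δ * Real.sqrt m * G := by
      have hcs := frobInner_le (gradf (W t)) (-(E t))
      rw [frobInner_neg_right, frobNorm_neg] at hcs
      have hE' := hE t ht
      have hGnn : 0 ≤ G := frobNorm_nonneg _
      nlinarith [frobNorm_nonneg (E t)]
    have hal := halign t ht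
    have hinner : frobInner (gradf (W t)) (-(η • O t)) ≤
        η * (-(1/4) * G + 5/2 * D) + η * (δ * Real.sqrt m * G) := by
      rw [h1]
      have a1 := mul_le_mul_of_nonneg_left hal hη.le
      have a2 := mul_le_mul_of_nonneg_left h2 hη.le
      linarith
    -- norm bound
    have h3 : frobNorm (-(η • O t)) ≤ η * (Real.sqrt m + δ * Real.sqrt m) := by
      rw [frobNorm_neg, frobNorm_smul, abs_of_pos hη]
      have hOb : frobNorm (O t) ≤ Real.sqrt m + δ * Real.sqrt m := by
        rw [hO t ht]
        calc frobNorm (P t + E t) ≤ frobNorm (P t) + frobNorm (E t) := frobNorm_add_le _ _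
          _ ≤ Real.sqrt m + δ * Real.sqrt m := by
              rw [frobNorm_of_orth _ (hP t ht)]
              exact add_le_add_right (hE t ht) _
      exact mul_le_mul_of_nonneg_left hOb hη.le
    have h4 : frobNorm (-(η • O t)) ^ 2 ≤ η ^ 2 * ((1 + δ) ^ 2 * m) := by
      have hnn := frobNorm_nonneg (-(η • O t))
      have hsq2 := mul_le_mul h3 h3 hnn (by positivity)
      have hexp : η * (Real.sqrt m + δ * Real.sqrt m) * (η * (Real.sqrt m + δ * Real.sqrt m))
          = η ^ 2 * ((1 + δ) ^ 2 * m) := by linear_combination (η ^ 2 * (1 + δ) ^ 2) * hsqm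
      rw [pow_two]; linarith
    have h5 : L / 2 * frobNorm (-(η • O t)) ^ 2 ≤ L / 2 * (η ^ 2 * ((1 + δ) ^ 2 * m)) :=
      mul_le_mul_of_nonneg_left h4 (by linarith)
    have hGnn : 0 ≤ G := frobNorm_nonneg _
    nlinarith [hdesc]
  -- summation
  have hsum := Finset.sum_le_sum hstep
  rw [← Finset.mul_sum] at hsum
  have htel : ∑ t ∈ Finset.Icc 1 T, (f (W t) - f (W (t + 1))) = f (W 1) - f (W (T + 1)) := by
    rw [← Finset.Ico_add_one_right_eq_Icc, Finset.sum_Ico_eq_sum_range]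
    simp only [Nat.add_sub_cancel]
    rw [Nat.add_comm T 1]
    exact Finset.sum_range_sub' (fun i => f (W (1 + i))) T
  have hsplit : ∑ t ∈ Finset.Icc 1 T,
      ((f (W t) - f (W (t + 1)))
        + (5 * η / 2) * frobNorm (gradf (W t) - M t)
        + (η ^ 2 * m * L / 2 + η ^ 2 * m * L * δ + η ^ 2 * L * m * δ ^ 2 / 2))
      = (f (W 1) - f (W (T + 1)))
        + (5 * η / 2) * ∑ t ∈ Finset.Icc 1 T, frobNorm (gradf (W t) - M t)
        + (T : ℝ) * (η ^ 2 * m * L / 2 + η ^ 2 * m * L * δ + η ^ 2 * L * m * δ ^ 2 / 2) := by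
    rw [Finset.sum_add_distrib, Finset.sum_add_distrib, htel, Finset.sum_const,
      ← Finset.mul_sum, Nat.card_Icc, Nat.add_sub_cancel, nsmul_eq_mul]
  rw [hsplit] at hsum
  have hf := hfstar (W (T + 1))
  have hTnn : (0:ℝ) ≤ (T:ℝ) := Nat.cast_nonneg T
  nlinarith [hsum]
end
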